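/- Let N ≥ 1 and let λ : Fin N → ℝ be strictly positive, with modified Rényi entropy S̃(n) = log(Σ_k λ_k^n) − n·(Σ_k λ_k^n log λ_k)/(Σ_k λ_k^n). For n > 0 define the tilted probability weights p_k(n) = λ_k^n / Σ_j λ_j^n. Then for every n > 0, S̃'(n) = −n·[ Σ_k p_k(n) (log λ_k)² − (Σ_k p_k(n) log λ_k)² ], i.e. the derivative of S̃ at n equals −n times the variance of log λ under the tilted distribution p(n). -/

import Mathlib

open scoped BigOperators

/-- The modified Rényi entropy `S̃(n) = log(Σ_k λ_k^n) − n·(Σ_k λ_k^n log λ_k)/(Σ_k λ_k^n)`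
of a strictly positive vector `λ`, as a function of a real variable `n`. -/
noncomputable def modifiedRenyi {N : ℕ} (lam : Fin N → ℝ) (n : ℝ) : ℝ :=
  Real.log (∑ k, lam k ^ n) -
    n * (∑ k, lam k ^ n * Real.log (lam k)) / (∑ k, lam k ^ n)

/-- The tilted probability weights `p_k(n) = λ_k^n / Σ_j λ_j^n`. -/
noncomputable def tiltedWeight {N : ℕ} (lam : Fin N → ℝ) (n : ℝ) (k : Fin N) : ℝ :=
  lam k ^ n / ∑ j, lam j ^ n

/-- For a strictly positive vector `λ : Fin N → ℝ` (`N ≥ 1`) and every `n > 0`,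
the derivative of the modified Rényi entropy equals `−n` times the variance of `log λ` under the
tilted distribution `p(n)`:
`S̃'(n) = −n·[ Σ_k p_k(n)(log λ_k)² − (Σ_k p_k(n) log λ_k)² ]`. -/
theorem deriv_modifiedRenyi_eq_neg_mul_variance {N : ℕ} (hN : 1 ≤ N)
    (lam : Fin N → ℝ) (hpos : ∀ k, 0 < lam k) (n : ℝ) (hn : 0 < n) :
    deriv (modifiedRenyi lam) n =
      -n * ((∑ k, tiltedWeight lam n k * (Real.log (lam k)) ^ 2) -
        (∑ k, tiltedWeight lam n k * Real.log (lam k)) ^ 2) := by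
  haveI : Nonempty (Fin N) := Fin.pos_iff_nonempty.mp hN
  set Z : ℝ → ℝ := fun m => ∑ k, lam k ^ m with hZdef
  set A : ℝ → ℝ := fun m => ∑ k, lam k ^ m * Real.log (lam k) with hAdef
  set B : ℝ → ℝ := fun m => ∑ k, lam k ^ m * (Real.log (lam k)) ^ 2 with hBdef
  have hZpos : 0 < Z n :=
    Finset.sum_pos (fun k _ => Real.rpow_pos_of_pos (hpos k) n) Finset.univ_nonempty
  have hZne : Z n ≠ 0 := ne_of_gt hZpos
  have hZ' : HasDerivAt Z (A n) n := by
    have := HasDerivAt.fun_sum (u := Finset.univ)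
      (fun k (_ : k ∈ Finset.univ) =>
        (Real.hasStrictDerivAt_const_rpow (hpos k) n).hasDerivAt)
    simpa [hZdef, hAdef] using this
  have hA' : HasDerivAt A (B n) n := by
    have := HasDerivAt.fun_sum (u := Finset.univ)
      (fun k (_ : k ∈ Finset.univ) =>
        ((Real.hasStrictDerivAt_const_rpow (hpos k) n).hasDerivAt).mul_const
          (Real.log (lam k)))
    simpa [hAdef, hBdef, mul_assoc, sq] using this
  have hD : HasDerivAt (modifiedRenyi lam)
      (A n / Z n - ((1 * A n + n * B n) * Z n - n * A n * A n) / (Z n) ^ 2) n := by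
    have h1 : HasDerivAt (fun m => Real.log (Z m)) (A n / Z n) n := hZ'.log hZne
    have h2 : HasDerivAt (fun m => m * A m / Z m)
        (((1 * A n + n * B n) * Z n - n * A n * A n) / (Z n) ^ 2) n :=
      ((hasDerivAt_id n).mul hA').div hZ' hZne
    exact h1.sub h2
  have h1 : ∑ k, tiltedWeight lam n k * (Real.log (lam k)) ^ 2 = B n / Z n := by
    simp [tiltedWeight, div_mul_eq_mul_div, ← Finset.sum_div, hBdef, hZdef]
  have h2 : ∑ k, tiltedWeight lam n k * Real.log (lam k) = A n / Z n := by
    simp [tiltedWeight, div_mul_eq_mul_div, ← Finset.sum_div, hAdef, hZdef]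
  rw [hD.deriv, h1, h2]
  field_simp
  ring
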